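/- Let ρ = (ρ^1,...,ρ^K) with a ≤ ρ^k ≤ b for all k (0 < a ≤ b), and suppose ρ̄ := (1/K)∑_k ρ^k > 1. If w is uniformly distributed on the simplex Δ_{K−1} = {w ∈ ℝ_+^K : ∑_k w^k = 1}, then P(⟨ρ, w⟩ ≤ 1) ≤ exp(−K(ρ̄−1)²/(4(b−a)²)). -/

import Mathlib

open MeasureTheory ProbabilityTheory Finset


lemma exp_sub_sq_le {x : ℝ} (hx : -(1/2) ≤ x) : Real.exp (x - x^2) ≤ 1 + x := by
  rcases le_or_gt 0 x with h | h
  · have h1 := Real.add_one_le_exp (x^2 - x)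
    have h2 : Real.exp (x - x^2) * Real.exp (x^2 - x) = 1 := by
      rw [← Real.exp_add]; ring_nf; exact Real.exp_zero
    have hq : (0:ℝ) < x^2 - x + 1 := by nlinarith [sq_nonneg (2*x - 1)]
    have hE1 : Real.exp (x - x^2) * (x^2 - x + 1) ≤ 1 := by
      nlinarith [mul_le_mul_of_nonneg_left h1 (Real.exp_pos (x - x^2)).le]
    nlinarith [Real.exp_pos (x - x^2)]
  · have hz : (0:ℝ) ≤ x^2 - x := by nlinarith
    have h1 : 1 + (x^2 - x) + (x^2 - x)^2/2 ≤ Real.exp (x^2 - x) := by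
      have h3 := Real.sum_le_exp_of_nonneg hz 3
      simp [Finset.sum_range_succ] at h3
      nlinarith [h3]
    have h2 : Real.exp (x - x^2) * Real.exp (x^2 - x) = 1 := by
      rw [← Real.exp_add]; ring_nf; exact Real.exp_zero
    have hq : (0:ℝ) < 1 + (x^2 - x) + (x^2 - x)^2/2 := by nlinarith [sq_nonneg (x^2 - x)]
    have hE1 : Real.exp (x - x^2) * (1 + (x^2 - x) + (x^2 - x)^2/2) ≤ 1 := by
      nlinarith [mul_le_mul_of_nonneg_left h1 (Real.exp_pos (x - x^2)).le]
    -- (1+x)(1 + (x²−x) + (x²−x)²/2) ≥ 1 for x ∈ [−1/2, 0]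
    have hpoly : 1 ≤ (1 + x) * (1 + (x^2 - x) + (x^2 - x)^2/2) := by
      nlinarith [sq_nonneg x, sq_nonneg (x + 1/2), sq_nonneg (x^2 - x)]
    nlinarith [Real.exp_pos (x - x^2)]

lemma inv_one_add_le {x : ℝ} (hx : -(1/2) ≤ x) : 1/(1+x) ≤ Real.exp (x^2 - x) := by
  have h0 : 0 < 1 + x := by linarith
  rw [div_le_iff₀ h0]
  have h2 : Real.exp (x - x^2) * Real.exp (x^2 - x) = 1 := by
    rw [← Real.exp_add]; ring_nf; exact Real.exp_zero
  nlinarith [exp_sub_sq_le hx, Real.exp_pos (x^2 - x)]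


lemma lintegral_pi_prod {μ : Measure ℝ} [SigmaFinite μ] :
    ∀ {n : ℕ} (f : Fin n → ℝ → ENNReal), (∀ i, Measurable (f i)) →
    ∫⁻ x, ∏ i, f i (x i) ∂(Measure.pi fun _ : Fin n => μ)
      = ∏ i, ∫⁻ y, f i y ∂μ := by
  intro n
  induction n with
  | zero =>
    intro f hf
    simp [lintegral_const, Measure.pi_univ]
  | succ n ih =>
    intro f hf
    have hmp := measurePreserving_piFinSuccAbove (fun _ : Fin (n+1) => μ) 0
    have hmeasF : Measurable (fun p : ℝ × (Fin n → ℝ) =>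
        f 0 p.1 * ∏ j, f (Fin.succ j) (p.2 j)) := by
      apply Measurable.mul
      · exact (hf 0).comp measurable_fst
      · exact (Finset.measurable_prod univ fun j _ =>
          (hf (Fin.succ j)).comp (measurable_pi_apply j)).comp measurable_snd
    have hcomp := hmp.lintegral_comp hmeasF
    have hg2 : Measurable fun z : Fin n → ℝ => ∏ j, f (Fin.succ j) (z j) :=
      Finset.measurable_prod univ fun j _ =>
        (hf (Fin.succ j)).comp (measurable_pi_apply j)
    have step1 : ∫⁻ x, ∏ i, f i (x i) ∂(Measure.pi fun _ : Fin (n+1) => μ)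
        = ∫⁻ b : ℝ × (Fin n → ℝ), f 0 b.1 * ∏ j, f (Fin.succ j) (b.2 j)
            ∂(μ.prod (Measure.pi fun _ : Fin n => μ)) := by
      rw [← hcomp]
      refine lintegral_congr fun x => ?_
      rw [Fin.prod_univ_succ]
      simp [MeasurableEquiv.piFinSuccAbove, Fin.zero_succAbove, Fin.tail]
    rw [step1, lintegral_prod_mul (hf 0).aemeasurable hg2.aemeasurable,
      ih (fun j => f (Fin.succ j)) (fun j => hf _), Fin.prod_univ_succ]

lemma lintegral_exp_expMeasure {s : ℝ} (hs : -1 < s) :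
    ∫⁻ y, ENNReal.ofReal (Real.exp (-(s * y))) ∂(expMeasure 1)
      = ENNReal.ofReal (1 / (1 + s)) := by
  have h1s : (0:ℝ) < 1 + s := by linarith
  have hpdf : Measurable (exponentialPDF 1) := by
    have heq : exponentialPDF 1 = fun x =>
        ENNReal.ofReal (if 0 ≤ x then 1 * Real.exp (-(1 * x)) else 0) :=
      funext fun x => exponentialPDF_eq 1 x
    rw [heq]
    refine Measurable.ennreal_ofReal (Measurable.ite ?_ ?_ measurable_const)
    · exact measurableSet_Ici
    · exact measurable_const.mul ((measurable_id.const_mul (1:ℝ)).neg.exp)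
  have hg : Measurable fun y : ℝ => ENNReal.ofReal (Real.exp (-(s * y))) := by
    exact ((measurable_id.const_mul s).neg.exp).ennreal_ofReal
  have hexp : expMeasure 1 = volume.withDensity (exponentialPDF 1) := rfl
  rw [hexp, lintegral_withDensity_eq_lintegral_mul _ hpdf hg]
  simp only [Pi.mul_apply]
  rw [← lintegral_add_compl (A := Set.Iio (0:ℝ)) _ measurableSet_Iio]
  have hzero : ∫⁻ x in Set.Iio (0:ℝ),
      exponentialPDF 1 x * ENNReal.ofReal (Real.exp (-(s * x))) ∂volume = 0 := by
    rw [setLIntegral_congr_fun_ae measurableSet_Iio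
      (ae_of_all _ (fun x hx => by rw [exponentialPDF_of_neg hx, zero_mul]))]
    simp
  rw [hzero, zero_add, Set.compl_Iio]
  have hIoi : (Set.Ici (0:ℝ) : Set ℝ) =ᵐ[volume] Set.Ioi (0:ℝ) :=
    (Ioi_ae_eq_Ici (a := (0:ℝ))).symm
  rw [setLIntegral_congr hIoi]
  have hcong : ∫⁻ x in Set.Ioi (0:ℝ),
      exponentialPDF 1 x * ENNReal.ofReal (Real.exp (-(s * x))) ∂volume
      = ∫⁻ x in Set.Ioi (0:ℝ), ENNReal.ofReal (Real.exp (-((1+s) * x))) ∂volume := by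
    apply setLIntegral_congr_fun_ae measurableSet_Ioi
    refine ae_of_all _ (fun x hx => ?_)
    rw [exponentialPDF_of_nonneg (le_of_lt hx), ← ENNReal.ofReal_mul (by positivity)]
    congr 1
    rw [one_mul, ← Real.exp_add]
    ring_nf
  rw [hcong]
  have hint : IntegrableOn (fun x : ℝ => Real.exp (-((1+s) * x))) (Set.Ioi 0) := by
    have h := exp_neg_integrableOn_Ioi 0 h1s
    refine h.congr_fun (fun x _ => by ring_nf) measurableSet_Ioi
  rw [← ofReal_integral_eq_lintegral_ofReal hint
    (ae_of_all _ (fun x => (Real.exp_pos _).le))]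
  congr 1
  have := integral_comp_mul_left_Ioi (fun u : ℝ => Real.exp (-u)) 0 h1s
  simp only [mul_zero, integral_exp_neg_Ioi_zero, smul_eq_mul, mul_one] at this
  rw [this]
  rw [one_div, inv_eq_one_div]  -- maybe

/-- The uniform distribution on the simplex `Δ_{K-1}` (i.e. `Dirichlet(1,…,1)`),
realised as the law of `Y / (∑ Y)` with `Y k` i.i.d. `Exponential(1)`. -/
noncomputable def simplexUniform (K : ℕ) : Measure (Fin K → ℝ) :=
  (Measure.pi fun _ : Fin K => ProbabilityTheory.expMeasure 1).map
    (fun Y k => Y k / ∑ j, Y j)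

/-- Edge probability bound: if `a ≤ ρ k ≤ b` with `0 < a ≤ b` and the Carli
mean `ρ̄ = (1/K) ∑ k, ρ k` exceeds 1, then for `w` uniform on the simplex,
`P(⟨ρ, w⟩ ≤ 1) ≤ exp (-K (ρ̄ - 1)^2 / (4 (b - a)^2))`. -/
theorem edge_probability_bound (K : ℕ) (hK : 1 ≤ K)
    (a b : ℝ) (ha : 0 < a) (hab : a ≤ b)
    (ρ : Fin K → ℝ) (hbd : ∀ k, a ≤ ρ k ∧ ρ k ≤ b)
    (hmean : 1 < ((1 : ℝ) / K) * ∑ k, ρ k) :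
    simplexUniform K {w | ∑ k, ρ k * w k ≤ 1}
      ≤ ENNReal.ofReal
        (Real.exp (-(K * (((1 : ℝ) / K) * ∑ k, ρ k - 1) ^ 2) / (4 * (b - a) ^ 2))) := by
  haveI : IsProbabilityMeasure (expMeasure 1) := isProbabilityMeasure_expMeasure one_pos
  haveI : Nonempty (Fin K) := ⟨⟨0, hK⟩⟩
  have hKpos : (0:ℝ) < K := by exact_mod_cast hK
  set μ : Measure (Fin K → ℝ) := Measure.pi fun _ : Fin K => expMeasure 1 with hμdef
  have hT : Measurable fun (Y : Fin K → ℝ) (k : Fin K) => Y k / ∑ j, Y j :=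
    measurable_pi_lambda _ fun k =>
      (measurable_pi_apply k).div (Finset.measurable_sum univ fun j _ => measurable_pi_apply j)
  have hS : MeasurableSet {w : Fin K → ℝ | ∑ k, ρ k * w k ≤ 1} :=
    measurableSet_le
      (Finset.measurable_sum univ fun k _ => by fun_prop)
      measurable_const
  have hrw : simplexUniform K {w | ∑ k, ρ k * w k ≤ 1}
      = μ ((fun (Y : Fin K → ℝ) k => Y k / ∑ j, Y j) ⁻¹' {w | ∑ k, ρ k * w k ≤ 1}) := by
    rw [simplexUniform, Measure.map_apply hT hS]
  rw [hrw]
  set A : Set (Fin K → ℝ) := {Y | ∀ k, 0 < Y k} with hA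
  have hAc : μ Aᶜ = 0 := by
    have hsub : Aᶜ ⊆ ⋃ k, Function.eval k ⁻¹' Set.Iic (0:ℝ) := by
      intro Y hY
      simp only [hA, Set.mem_compl_iff, Set.mem_setOf_eq, not_forall, not_lt] at hY
      obtain ⟨k, hk⟩ := hY
      exact Set.mem_iUnion.2 ⟨k, hk⟩
    refine measure_mono_null hsub (measure_iUnion_null fun k =>
      Measure.pi_eval_preimage_null _ ?_)
    rw [show expMeasure 1 = volume.withDensity (exponentialPDF 1) from rfl,
      withDensity_apply _ measurableSet_Iic,
      setLIntegral_congr (Iio_ae_eq_Iic (a := (0:ℝ))).symm]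
    exact lintegral_exponentialPDF_of_nonpos le_rfl
  set B : Set (Fin K → ℝ) := {Y | ∑ k, (ρ k - 1) * Y k ≤ 0} with hB
  have hBmeas : MeasurableSet B :=
    measurableSet_le
      (Finset.measurable_sum univ fun k _ => (measurable_pi_apply k).const_mul _)
      measurable_const
  have hsub2 : (fun (Y : Fin K → ℝ) k => Y k / ∑ j, Y j) ⁻¹' {w | ∑ k, ρ k * w k ≤ 1}
      ⊆ (B ∩ A) ∪ Aᶜ := by
    intro Y hY
    by_cases hYA : Y ∈ A
    · left
      refine ⟨?_, hYA⟩
      have hs : 0 < ∑ j, Y j := Finset.sum_pos (fun j _ => hYA j) Finset.univ_nonempty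
      have h1 : ∑ k, ρ k * (Y k / ∑ j, Y j) ≤ 1 := hY
      have h2 : ∑ k, ρ k * (Y k / ∑ j, Y j) = (∑ k, ρ k * Y k) / ∑ j, Y j := by
        rw [Finset.sum_div]
        exact Finset.sum_congr rfl fun k _ => (mul_div_assoc _ _ _).symm
      rw [h2, div_le_one hs] at h1
      have h3 : ∑ k, (ρ k - 1) * Y k = (∑ k, ρ k * Y k) - ∑ j, Y j := by
        rw [← Finset.sum_sub_distrib]
        exact Finset.sum_congr rfl fun k _ => by ring
      show ∑ k, (ρ k - 1) * Y k ≤ 0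
      rw [h3]
      linarith
    · right; exact hYA
  have hmain : μ ((fun (Y : Fin K → ℝ) k => Y k / ∑ j, Y j) ⁻¹' {w | ∑ k, ρ k * w k ≤ 1})
      ≤ μ (B ∩ A) := by
    refine le_trans (measure_mono hsub2) (le_trans (measure_union_le _ _) ?_)
    rw [hAc, add_zero]
  refine le_trans hmain ?_
  have hsumK : (K:ℝ) < ∑ k, ρ k := by
    have h2 := mul_lt_mul_of_pos_left hmean hKpos
    rw [mul_one] at h2
    have h3 : (K:ℝ) * (1/(K:ℝ) * ∑ k, ρ k) = ∑ k, ρ k := by field_simp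
    linarith
  rcases lt_or_ge a 1 with haa | haa
  · -- main Chernoff case
    set ε : ℝ := ((1:ℝ)/K) * ∑ k, ρ k - 1 with hε
    have hεpos : 0 < ε := by simp only [hε]; linarith
    have hsb : ∑ k, ρ k ≤ K * b := by
      calc ∑ k, ρ k ≤ ∑ _k : Fin K, b := Finset.sum_le_sum fun k _ => (hbd k).2
        _ = K * b := by rw [Finset.sum_const, Finset.card_univ, Fintype.card_fin,
              nsmul_eq_mul]
    have hmb : ((1:ℝ)/K) * ∑ k, ρ k ≤ b := by
      rw [one_div, inv_mul_le_iff₀ hKpos]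
      linarith
    have hb1 : 1 < b := lt_of_lt_of_le hmean hmb
    have hba : 0 < b - a := by linarith
    have hεba : ε ≤ b - a := by simp only [hε]; linarith
    set t : ℝ := ε / (2 * (b - a)^2) with ht
    have htpos : 0 < t := by positivity
    have hck : ∀ k, |ρ k - 1| ≤ b - a := fun k =>
      abs_le.2 ⟨by linarith [(hbd k).1], by linarith [(hbd k).2]⟩
    have hsk : ∀ k, |t * (ρ k - 1)| ≤ 1/2 := by
      intro k
      rw [abs_mul, abs_of_pos htpos]
      calc t * |ρ k - 1| ≤ t * (b - a) := by
            exact mul_le_mul_of_nonneg_left (hck k) htpos.le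
        _ = ε / (2 * (b - a)) := by rw [ht]; field_simp
        _ ≤ 1/2 := by rw [div_le_div_iff₀ (by linarith) (by norm_num)]; linarith
    set c : Fin K → ℝ := fun k => t * (ρ k - 1) with hc
    have hcb : ∀ k, -(1/2) ≤ c k ∧ c k ≤ 1/2 := fun k => abs_le.1 (hsk k)
    set f : Fin K → ℝ → ENNReal := fun k y => ENNReal.ofReal (Real.exp (-(c k * y))) with hf
    have hfmeas : ∀ k, Measurable (f k) := fun k =>
      ((measurable_id.const_mul (c k)).neg.exp).ennreal_ofReal
    -- step 1 : Chernoff bound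
    have step1 : μ (B ∩ A) ≤ ∫⁻ Y, ∏ k, f k (Y k) ∂μ := by
      refine le_trans (measure_mono Set.inter_subset_left) ?_
      rw [← setLIntegral_one]
      have hmono : ∀ Y ∈ B, (1:ENNReal) ≤ ∏ k, f k (Y k) := by
        intro Y hYB
        have hprod : ∏ k, f k (Y k)
            = ENNReal.ofReal (Real.exp (∑ k, -(c k * Y k))) := by
          rw [Real.exp_sum]
          exact (ENNReal.ofReal_prod_of_nonneg fun k _ => (Real.exp_pos _).le).symm
        have hsnn : (0:ℝ) ≤ ∑ k, -(c k * Y k) := by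
          have he : ∑ k, -(c k * Y k) = -t * ∑ k, (ρ k - 1) * Y k := by
            rw [Finset.mul_sum]
            exact Finset.sum_congr rfl fun k _ => by simp only [hc]; ring
          rw [he]
          have := mul_nonneg htpos.le (neg_nonneg.2 hYB)
          nlinarith
        rw [hprod]
        calc (1:ENNReal) = ENNReal.ofReal (Real.exp 0) := by
              rw [Real.exp_zero, ENNReal.ofReal_one]
          _ ≤ _ := ENNReal.ofReal_le_ofReal (Real.exp_le_exp.2 hsnn)
      calc ∫⁻ Y in B, 1 ∂μ ≤ ∫⁻ Y in B, ∏ k, f k (Y k) ∂μ :=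
            setLIntegral_mono (Finset.measurable_prod univ fun k _ =>
              (hfmeas k).comp (measurable_pi_apply k)) hmono
        _ ≤ ∫⁻ Y, ∏ k, f k (Y k) ∂μ := setLIntegral_le_lintegral _ _
    -- step 2 : factorize
    have step2 : ∫⁻ Y, ∏ k, f k (Y k) ∂μ = ∏ k, ENNReal.ofReal (1 / (1 + c k)) := by
      rw [lintegral_pi_prod f hfmeas]
      exact Finset.prod_congr rfl fun k _ =>
        lintegral_exp_expMeasure (by linarith [(hcb k).1])
    -- step 3 : real estimate
    have hcpos : ∀ k, (0:ℝ) < 1 + c k := fun k => by linarith [(hcb k).1]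
    have step3 : ∏ k, ENNReal.ofReal (1 / (1 + c k))
        ≤ ENNReal.ofReal (Real.exp (-(K * ε ^ 2) / (4 * (b - a) ^ 2))) := by
      rw [← ENNReal.ofReal_prod_of_nonneg
        (fun k _ => (div_pos one_pos (hcpos k)).le)]
      refine ENNReal.ofReal_le_ofReal ?_
      calc ∏ k, 1 / (1 + c k) ≤ ∏ k, Real.exp ((c k)^2 - c k) :=
            Finset.prod_le_prod (fun k _ => (div_pos one_pos (hcpos k)).le)
              (fun k _ => inv_one_add_le (hcb k).1)
        _ = Real.exp (∑ k, ((c k)^2 - c k)) := (Real.exp_sum _ _).symm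
        _ ≤ Real.exp (-(K * ε ^ 2) / (4 * (b - a) ^ 2)) := by
            refine Real.exp_le_exp.2 ?_
            have hsq : ∑ k, (c k)^2 ≤ (K:ℝ) * (t*(b-a))^2 := by
              calc ∑ k, (c k)^2 ≤ ∑ _k : Fin K, (t*(b-a))^2 :=
                    Finset.sum_le_sum (fun k _ => by
                      have h1 : |c k| ≤ t * (b - a) := by
                        simp only [hc]
                        rw [abs_mul, abs_of_pos htpos]
                        exact mul_le_mul_of_nonneg_left (hck k) htpos.le
                      calc (c k)^2 = |c k|^2 := (sq_abs _).symm
                        _ ≤ (t*(b-a))^2 :=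
                          pow_le_pow_left₀ (abs_nonneg _) h1 2)
                _ = (K:ℝ) * (t*(b-a))^2 := by
                    rw [Finset.sum_const, Finset.card_univ, Fintype.card_fin, nsmul_eq_mul]
            have hsumc : ∑ k, c k = t * ((K:ℝ) * ε) := by
              simp only [hc]
              rw [← Finset.mul_sum]
              congr 1
              rw [Finset.sum_sub_distrib, Finset.sum_const, Finset.card_univ,
                Fintype.card_fin, nsmul_eq_mul, mul_one]
              rw [hε]
              field_simp
            have hsplit : ∑ k, ((c k)^2 - c k) = (∑ k, (c k)^2) - ∑ k, c k :=
              Finset.sum_sub_distrib _ _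
            have e1 : (K:ℝ) * (t*(b-a))^2 = K * ε^2 / (4 * (b-a)^2) := by
              rw [ht]; field_simp; ring
            have e2 : t * ((K:ℝ) * ε) = K * ε^2 / (2 * (b-a)^2) := by
              rw [ht]; field_simp
            have e3 : -((K:ℝ) * ε ^ 2) / (4 * (b - a) ^ 2)
                = K * ε^2 / (4 * (b-a)^2) - K * ε^2 / (2 * (b-a)^2) := by
              field_simp; ring
            rw [hsplit, hsumc, e2, e3]
            linarith [e1 ▸ hsq]
    exact le_trans step1 (le_trans step2.le step3)
  · -- degenerate case : B ∩ A = ∅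
    have hex : ∃ k, 1 < ρ k := by
      by_contra h
      push_neg at h
      have hle : ∑ k, ρ k ≤ ∑ _k : Fin K, (1:ℝ) := Finset.sum_le_sum fun k _ => h k
      rw [Finset.sum_const, Finset.card_univ, Fintype.card_fin, nsmul_eq_mul, mul_one] at hle
      linarith
    obtain ⟨k0, hk0⟩ := hex
    have hempty : B ∩ A = ∅ := by
      ext Y
      simp only [Set.mem_inter_iff, Set.mem_empty_iff_false, iff_false, not_and]
      intro hYB hYA
      have hpos : 0 < ∑ k, (ρ k - 1) * Y k :=
        Finset.sum_pos' (fun k _ => mul_nonneg (by linarith [(hbd k).1]) (hYA k).le)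
          ⟨k0, Finset.mem_univ k0, mul_pos (by linarith) (hYA k0)⟩
      exact absurd hYB (not_le.2 hpos)
    rw [hempty, measure_empty]
    exact zero_le
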